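/- lim_{z→∞} ∫₀¹ ( sin(zx) − sinh(zx) − cos(zx) + cosh(zx) )² dx = 1. -/

import Mathlib

open Real Filter MeasureTheory

lemma beam_aux (z : ℝ) (hz : 0 < z) :
    |(∫ x in (0:ℝ)..1,
        (Real.sin (z * x) - Real.sinh (z * x) - Real.cos (z * x)
          + Real.cosh (z * x)) ^ 2) - 1| ≤ 6 / z := by
  have hrw : ∀ x : ℝ,
      (Real.sin (z * x) - Real.sinh (z * x) - Real.cos (z * x) + Real.cosh (z * x)) ^ 2
        = (1 - Real.sin (2 * z * x))
          + (2 * Real.exp (-(z * x)) * (Real.sin (z * x) - Real.cos (z * x))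
            + Real.exp (-(2 * z * x))) := by
    intro x
    have h1 : Real.cosh (z * x) - Real.sinh (z * x) = Real.exp (-(z * x)) :=
      Real.cosh_sub_sinh _
    have h2 : Real.sin (z * x) ^ 2 + Real.cos (z * x) ^ 2 = 1 := Real.sin_sq_add_cos_sq _
    have h3 : Real.sin (2 * z * x) = 2 * Real.sin (z * x) * Real.cos (z * x) := by
      rw [show 2 * z * x = 2 * (z * x) by ring, Real.sin_two_mul]
    have h4 : Real.exp (-(2 * z * x)) = Real.exp (-(z * x)) * Real.exp (-(z * x)) := by
      rw [← Real.exp_add]; ring_nf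
    have h5 : Real.sin (z * x) - Real.sinh (z * x) - Real.cos (z * x) + Real.cosh (z * x)
        = Real.sin (z * x) - Real.cos (z * x) + Real.exp (-(z * x)) := by linarith
    rw [h5]
    linear_combination h2 + h3 - h4
  have hI1 : IntervalIntegrable (fun x => 1 - Real.sin (2 * z * x)) volume 0 1 :=
    (Continuous.intervalIntegrable (by fun_prop) 0 1)
  have hI2 : IntervalIntegrable
      (fun x => 2 * Real.exp (-(z * x)) * (Real.sin (z * x) - Real.cos (z * x))
        + Real.exp (-(2 * z * x))) volume 0 1 :=
    (Continuous.intervalIntegrable (by fun_prop) 0 1)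
  have hsplit : (∫ x in (0:ℝ)..1,
        (Real.sin (z * x) - Real.sinh (z * x) - Real.cos (z * x) + Real.cosh (z * x)) ^ 2)
      = (∫ x in (0:ℝ)..1, (1 - Real.sin (2 * z * x)))
        + ∫ x in (0:ℝ)..1,
            (2 * Real.exp (-(z * x)) * (Real.sin (z * x) - Real.cos (z * x))
              + Real.exp (-(2 * z * x))) := by
    rw [← intervalIntegral.integral_add hI1 hI2]
    simp only [hrw]
  have h2z : (2 * z) ≠ 0 := by positivity
  have hsin : (∫ x in (0:ℝ)..1, Real.sin (2 * z * x))
      = (2 * z)⁻¹ * (1 - Real.cos (2 * z)) := by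
    rw [intervalIntegral.integral_comp_mul_left Real.sin h2z]
    simp [integral_sin, smul_eq_mul]
  have hA : (∫ x in (0:ℝ)..1, (1 - Real.sin (2 * z * x)))
      = 1 - (2 * z)⁻¹ * (1 - Real.cos (2 * z)) := by
    rw [intervalIntegral.integral_sub (Continuous.intervalIntegrable (by fun_prop) 0 1)
      (Continuous.intervalIntegrable (by fun_prop) 0 1), hsin]
    simp
  -- bound the second integral
  have hexp : (∫ x in (0:ℝ)..1, Real.exp (-z * x)) = z⁻¹ * (1 - Real.exp (-z)) := by
    have hz' : (-z) ≠ 0 := by intro h; nlinarith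
    rw [intervalIntegral.integral_comp_mul_left Real.exp hz']
    simp [integral_exp, smul_eq_mul]
    ring
  have hbd : |∫ x in (0:ℝ)..1,
      (2 * Real.exp (-(z * x)) * (Real.sin (z * x) - Real.cos (z * x))
        + Real.exp (-(2 * z * x)))| ≤ 5 / z := by
    have habs : |∫ x in (0:ℝ)..1,
        (2 * Real.exp (-(z * x)) * (Real.sin (z * x) - Real.cos (z * x))
          + Real.exp (-(2 * z * x)))|
        ≤ ∫ x in (0:ℝ)..1, 5 * Real.exp (-z * x) := by
      apply intervalIntegral.abs_integral_le_integral_abs (by norm_num) |>.trans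
      apply intervalIntegral.integral_mono_on (by norm_num)
        (hI2.abs) (Continuous.intervalIntegrable (by fun_prop) 0 1)
      intro x hx
      obtain ⟨hx0, hx1⟩ := hx
      have hE1 : Real.exp (-(z * x)) ≤ 1 := by
        apply Real.exp_le_one_iff.mpr; nlinarith
      have hEpos : 0 < Real.exp (-(z * x)) := Real.exp_pos _
      have hE2 : Real.exp (-(2 * z * x)) ≤ Real.exp (-(z * x)) := by
        apply Real.exp_le_exp.mpr; nlinarith
      have hs : |Real.sin (z * x) - Real.cos (z * x)| ≤ 2 := by
        have := Real.abs_sin_le_one (z * x)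
        have := Real.abs_cos_le_one (z * x)
        rw [abs_le] at *
        constructor <;> nlinarith [this.1, this.2]
      have : |2 * Real.exp (-(z * x)) * (Real.sin (z * x) - Real.cos (z * x))
          + Real.exp (-(2 * z * x))|
          ≤ 2 * Real.exp (-(z * x)) * 2 + Real.exp (-(z * x)) := by
        calc _ ≤ |2 * Real.exp (-(z * x)) * (Real.sin (z * x) - Real.cos (z * x))|
              + |Real.exp (-(2 * z * x))| := abs_add_le _ _
        _ ≤ 2 * Real.exp (-(z * x)) * 2 + Real.exp (-(z * x)) := by
            rw [abs_mul, abs_of_nonneg (by positivity : (0:ℝ) ≤ 2 * Real.exp (-(z * x))),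
              abs_of_nonneg (Real.exp_pos _).le]
            have := mul_le_mul_of_nonneg_left hs (by positivity : (0:ℝ) ≤ 2 * Real.exp (-(z * x)))
            linarith
      calc |2 * Real.exp (-(z * x)) * (Real.sin (z * x) - Real.cos (z * x))
          + Real.exp (-(2 * z * x))| ≤ 2 * Real.exp (-(z * x)) * 2 + Real.exp (-(z * x)) := this
      _ = 5 * Real.exp (-z * x) := by ring_nf
    have hval : (∫ x in (0:ℝ)..1, 5 * Real.exp (-z * x)) = 5 * (z⁻¹ * (1 - Real.exp (-z))) := by
      rw [intervalIntegral.integral_const_mul, hexp]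
    have : 5 * (z⁻¹ * (1 - Real.exp (-z))) ≤ 5 / z := by
      rw [div_eq_mul_inv]
      have : 1 - Real.exp (-z) ≤ 1 := by linarith [Real.exp_pos (-z)]
      have hzi : (0:ℝ) < z⁻¹ := by positivity
      nlinarith
    linarith [habs, hval ▸ habs]
  rw [hsplit, hA]
  have hcos : |(2 * z)⁻¹ * (1 - Real.cos (2 * z))| ≤ 1 / z := by
    rw [abs_mul, abs_of_nonneg (by positivity : (0:ℝ) ≤ (2 * z)⁻¹)]
    have h1 : |1 - Real.cos (2 * z)| ≤ 2 := by
      have := Real.neg_one_le_cos (2 * z)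
      have := Real.cos_le_one (2 * z)
      rw [abs_le]; constructor <;> linarith
    have : (2 * z)⁻¹ * |1 - Real.cos (2 * z)| ≤ (2 * z)⁻¹ * 2 := by
      apply mul_le_mul_of_nonneg_left h1 (by positivity)
    calc (2 * z)⁻¹ * |1 - Real.cos (2 * z)| ≤ (2 * z)⁻¹ * 2 := this
    _ = 1 / z := by field_simp
  calc |1 - (2 * z)⁻¹ * (1 - Real.cos (2 * z)) + (∫ x in (0:ℝ)..1,
        (2 * Real.exp (-(z * x)) * (Real.sin (z * x) - Real.cos (z * x))
          + Real.exp (-(2 * z * x)))) - 1|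
      ≤ |(2 * z)⁻¹ * (1 - Real.cos (2 * z))| + |∫ x in (0:ℝ)..1,
        (2 * Real.exp (-(z * x)) * (Real.sin (z * x) - Real.cos (z * x))
          + Real.exp (-(2 * z * x)))| := by
        rw [show (1 - (2 * z)⁻¹ * (1 - Real.cos (2 * z)) + _ - 1) = _ from rfl]
        have := abs_add_le (-((2 * z)⁻¹ * (1 - Real.cos (2 * z)))) (∫ x in (0:ℝ)..1,
          (2 * Real.exp (-(z * x)) * (Real.sin (z * x) - Real.cos (z * x))
            + Real.exp (-(2 * z * x))))
        rw [abs_neg] at this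
        refine (Eq.le ?_).trans this
        congr 1
        ring
  _ ≤ 1 / z + 5 / z := add_le_add hcos hbd
  _ = 6 / z := by ring

/-- `∫₀¹ (sin(zx) − sinh(zx) − cos(zx) + cosh(zx))² dx → 1` as `z → ∞`. -/
theorem beam_integral_limit_one :
    Tendsto
      (fun z : ℝ => ∫ x in (0:ℝ)..1,
        (Real.sin (z * x) - Real.sinh (z * x) - Real.cos (z * x)
          + Real.cosh (z * x)) ^ 2)
      atTop (nhds 1) := by
  set I : ℝ → ℝ := fun z => ∫ x in (0:ℝ)..1,
    (Real.sin (z * x) - Real.sinh (z * x) - Real.cos (z * x) + Real.cosh (z * x)) ^ 2 with hI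
  have key : ∀ᶠ z in atTop, ‖I z - 1‖ ≤ 6 / z := by
    filter_upwards [eventually_gt_atTop (0:ℝ)] with z hz
    simpa [Real.norm_eq_abs] using beam_aux z hz
  have h6 : Tendsto (fun z : ℝ => 6 / z) atTop (nhds 0) :=
    tendsto_const_nhds.div_atTop tendsto_id
  have h0 : Tendsto (fun z => I z - 1) atTop (nhds 0) := squeeze_zero_norm' key h6
  have := h0.add (tendsto_const_nhds (x := (1:ℝ)))
  simpa using this
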